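/- Let I be a negative definite symmetric integer matrix indexed by the vertices of a finite tree Γ, with I_{uw} = 1 when u ≠ w are adjacent, I_{uw} = 0 when u ≠ w are not adjacent, and arbitrary diagonal entries b_w. Set d = det(-I) and a_{uw} = -d · (I^{-1})_{uw}. Then every a_{uw} is a positive integer. -/

import Mathlib

open BigOperators Matrix Finset

lemma inv_entry_pos {V : Type*} [Fintype V] [DecidableEq V]
    (G : SimpleGraph V) [DecidableRel G.Adj] (hc : G.Connected)
    (M : Matrix V V ℝ) (hM : M.PosDef)
    (hoff : ∀ u w : V, u ≠ w → M u w = if G.Adj u w then -1 else 0) :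
    ∀ u w : V, 0 < M⁻¹ u w := by
  intro u w
  set x : V → ℝ := fun i => M⁻¹ i w with hxdef
  have hMdet : IsUnit M.det := isUnit_iff_ne_zero.mpr hM.det_pos.ne'
  have hMx : M *ᵥ x = Pi.single w 1 := by
    funext i
    have h1 : (M * M⁻¹) i w = (1 : Matrix V V ℝ) i w := by
      rw [Matrix.mul_nonsing_inv M hMdet]
    rw [Matrix.mul_apply] at h1
    simpa [Matrix.mulVec, dotProduct, hxdef, Matrix.one_apply,
      Pi.single_apply, eq_comm] using h1
  have hoffle : ∀ i j : V, i ≠ j → M i j ≤ 0 := by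
    intro i j hij
    rw [hoff i j hij]
    split <;> norm_num
  -- nonnegativity
  have hnn : ∀ i, 0 ≤ x i := by
    set y : V → ℝ := fun i => max (-x i) 0 with hy
    set z : V → ℝ := fun i => max (x i) 0 with hz
    have hy0 : ∀ i, 0 ≤ y i := fun i => le_max_right _ _
    have hz0 : ∀ i, 0 ≤ z i := fun i => le_max_right _ _
    have hyz : ∀ i, y i * z i = 0 := by
      intro i
      rcases le_total (x i) 0 with h | h
      · simp [hy, hz, max_eq_right h, mul_zero]
      · simp [hy, hz, max_eq_right (neg_nonpos.mpr h), zero_mul]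
    have hxzy : x = z - y := by
      funext i
      rcases le_total (x i) 0 with h | h
      · simp [hy, hz, max_eq_right h, max_eq_left (neg_nonneg.mpr h)]
      · simp [hy, hz, max_eq_left h, max_eq_right (neg_nonpos.mpr h)]
    have hMz : y ⬝ᵥ (M *ᵥ z) ≤ 0 := by
      rw [dotProduct]
      apply Finset.sum_nonpos
      intro i _
      rw [Matrix.mulVec, dotProduct, Finset.mul_sum]
      apply Finset.sum_nonpos
      intro j _
      by_cases hij : i = j
      · subst hij
        have : y i * (M i i * z i) = M i i * (y i * z i) := by ring
        rw [this, hyz, mul_zero]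
      · have := hoffle i j hij
        have : y i * (M i j * z j) = (M i j) * (y i * z j) := by ring
        rw [this]
        exact mul_nonpos_of_nonpos_of_nonneg (hoffle i j hij)
          (mul_nonneg (hy0 i) (hz0 j))
    have hMyx : y ⬝ᵥ (M *ᵥ x) = y w := by
      rw [hMx, dotProduct_single, mul_one]
    have hMy : y ⬝ᵥ (M *ᵥ y) ≤ 0 := by
      have hsub : M *ᵥ y = M *ᵥ z - M *ᵥ x := by
        rw [hxzy, Matrix.mulVec_sub]
        abel
      rw [hsub, dotProduct_sub, hMyx]
      have := hy0 w
      linarith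
    have hyzero : y = 0 := by
      by_contra hne
      have := hM.dotProduct_mulVec_pos hne
      rw [star_trivial] at this
      linarith
    intro i
    have : y i = 0 := congrFun hyzero i
    have : max (-x i) 0 = 0 := this
    nlinarith [le_max_left (-x i) (0:ℝ), this]
  -- positive diagonal
  have hdiag : ∀ i, 0 < M i i := by
    intro i
    have hne : (Pi.single i 1 : V → ℝ) ≠ 0 := by
      intro h
      have := congrFun h i
      simp at this
    have := hM.dotProduct_mulVec_pos hne
    rw [star_trivial, Matrix.mulVec_single, single_dotProduct] at this
    simpa using this
  -- key propagation
  have hkey : ∀ j, (j = w ∨ ∃ i, G.Adj j i ∧ 0 < x i) → 0 < x j := by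
    intro j hj
    have hMxj : ∑ k, M j k * x k = (Pi.single w 1 : V → ℝ) j := by
      have := congrFun hMx j
      rwa [Matrix.mulVec, dotProduct] at this
    have hsplit : M j j * x j + ∑ k ∈ Finset.univ.erase j, M j k * x k
        = (Pi.single w 1 : V → ℝ) j := by
      rw [Finset.add_sum_erase Finset.univ (fun k => M j k * x k) (Finset.mem_univ j)]
      exact hMxj
    have hterms : ∀ k ∈ Finset.univ.erase j, 0 ≤ (-(M j k)) * x k := by
      intro k hk
      have hkj : k ≠ j := (Finset.mem_erase.mp hk).1
      exact mul_nonneg (by linarith [hoffle j k (Ne.symm hkj)]) (hnn k)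
    have hsum0 : 0 ≤ ∑ k ∈ Finset.univ.erase j, (-(M j k)) * x k :=
      Finset.sum_nonneg hterms
    have hsumeq : ∑ k ∈ Finset.univ.erase j, (-(M j k)) * x k
        = -∑ k ∈ Finset.univ.erase j, M j k * x k := by
      rw [← Finset.sum_neg_distrib]
      congr 1; funext k; ring
    have hpos : 0 < M j j * x j := by
      rcases hj with rfl | ⟨i, hadj, hxi⟩
      · have h1 : (Pi.single j 1 : V → ℝ) j = 1 := by simp
        rw [h1] at hsplit
        linarith [hsum0, hsumeq, hsplit]
      · have hij : i ≠ j := fun h => (G.ne_of_adj hadj) h.symm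
        have hmem : i ∈ Finset.univ.erase j := Finset.mem_erase.mpr ⟨hij, Finset.mem_univ i⟩
        have hle : (-(M j i)) * x i ≤ ∑ k ∈ Finset.univ.erase j, (-(M j k)) * x k :=
          Finset.single_le_sum hterms hmem
        have hMji : M j i = -1 := by
          rw [hoff j i (Ne.symm hij), if_pos hadj]
        rw [hMji] at hle
        have hP : 0 ≤ (Pi.single w 1 : V → ℝ) j := by
          rcases eq_or_ne j w with rfl | h
          · simp
          · simp [Pi.single_eq_of_ne h]
        have := hsumeq
        nlinarith [hle, hP, hsplit, hsumeq]
    rcases (hnn j).lt_or_eq with h | h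
    · exact h
    · exfalso; rw [← h, mul_zero] at hpos; exact lt_irrefl 0 hpos
  have aux : ∀ (a b : V) (_ : G.Walk a b), 0 < x a → 0 < x b := by
    intro a b p
    induction p with
    | nil => exact id
    | cons h p ih =>
        intro ha
        exact ih (hkey _ (Or.inr ⟨_, h.symm, ha⟩))
  obtain ⟨p⟩ := hc.preconnected w u
  exact aux w u p (hkey w (Or.inl rfl))
open BigOperators Matrix

lemma entry_eq_adj {V : Type*} [Fintype V] [DecidableEq V] (I : Matrix V V ℤ)
    (F : Type*) [Field F] [CharZero F] (h1 : 1 ≤ Fintype.card V) (hdet : I.det ≠ 0)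
    (u w : V) :
    -(((-I).det : ℤ) : F) * ((I.map ((↑) : ℤ → F))⁻¹ u w)
      = (((-1) ^ (Fintype.card V - 1) * I.adjugate u w : ℤ) : F) := by
  have hdQ : (I.map ((↑) : ℤ → F)).det = ((I.det : ℤ) : F) := by
    simpa using (RingHom.map_det (Int.castRingHom F) I).symm
  have haQ : (I.map ((↑) : ℤ → F)).adjugate = I.adjugate.map ((↑) : ℤ → F) := by
    simpa using ((Int.castRingHom F).map_adjugate I).symm
  have hdne : ((I.det : ℤ) : F) ≠ 0 := by exact_mod_cast hdet
  rw [Matrix.inv_def, hdQ, haQ, Ring.inverse_eq_inv']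
  have hentry : (((I.det : ℤ) : F)⁻¹ • I.adjugate.map ((↑) : ℤ → F)) u w
      = ((I.det : ℤ) : F)⁻¹ * ((I.adjugate u w : ℤ) : F) := by
    simp [Matrix.smul_apply, Matrix.map_apply]
  rw [hentry, Matrix.det_neg]
  have hn : Fintype.card V = (Fintype.card V - 1) + 1 := (Nat.succ_pred_eq_of_pos h1).symm
  have hpow : ((-1 : ℤ) ^ Fintype.card V : ℤ) = -(-1 : ℤ) ^ (Fintype.card V - 1) := by
    conv_lhs => rw [hn]
    rw [pow_succ]; ring
  push_cast [hpow]
  have hdne' : (I.map fun x => (x : F)).det ≠ 0 := by rw [hdQ]; exact hdne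
  field_simp

theorem stmt8 (V : Type*) [Fintype V] [DecidableEq V]
    (G : SimpleGraph V) [DecidableRel G.Adj] (hG : G.IsTree)
    (I : Matrix V V ℤ)
    (hoff : ∀ u w : V, u ≠ w → I u w = if G.Adj u w then 1 else 0)
    (hneg : Matrix.PosDef ((-I).map ((↑) : ℤ → ℝ))) :
    ∀ u w : V,
      0 < -(((-I).det : ℚ)) * ((I.map ((↑) : ℤ → ℚ))⁻¹ u w) ∧
      ∃ n : ℤ, -(((-I).det : ℚ)) * ((I.map ((↑) : ℤ → ℚ))⁻¹ u w) = (n : ℚ) := by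
  intro u w
  have hconn : G.Connected := hG.isConnected
  have : Nonempty V := hconn.nonempty
  have h1 : 1 ≤ Fintype.card V := Fintype.card_pos
  set M : Matrix V V ℝ := (-I).map ((↑) : ℤ → ℝ) with hMdef
  have hdetM : 0 < M.det := hneg.det_pos
  have hdetcast : (((-I).det : ℤ) : ℝ) = M.det := by
    simpa using (RingHom.map_det (Int.castRingHom ℝ) (-I))
  have hdI : 0 < (-I).det := by
    have : (0 : ℝ) < (((-I).det : ℤ) : ℝ) := hdetcast ▸ hdetM
    exact_mod_cast this
  have hIdet_ne : I.det ≠ 0 := by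
    intro h
    rw [Matrix.det_neg, h, mul_zero] at hdI
    exact lt_irrefl 0 hdI
  set N : ℤ := (-1) ^ (Fintype.card V - 1) * I.adjugate u w with hN
  have hQ : -(((-I).det : ℚ)) * ((I.map ((↑) : ℤ → ℚ))⁻¹ u w) = (N : ℚ) :=
    entry_eq_adj I ℚ h1 hIdet_ne u w
  have hR : -(((-I).det : ℝ)) * ((I.map ((↑) : ℤ → ℝ))⁻¹ u w) = (N : ℝ) :=
    entry_eq_adj I ℝ h1 hIdet_ne u w
  -- the real matrix I.map ℝ is -M
  have hIM : I.map ((↑) : ℤ → ℝ) = -M := by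
    funext i j
    simp [hMdef, Matrix.map_apply]
  have hMdetu : IsUnit M.det := isUnit_iff_ne_zero.mpr hdetM.ne'
  have hinvneg : (I.map ((↑) : ℤ → ℝ))⁻¹ = -(M⁻¹) := by
    rw [hIM]
    apply Matrix.inv_eq_right_inv
    rw [neg_mul_neg, Matrix.mul_nonsing_inv M hMdetu]
  have hMoff : ∀ a b : V, a ≠ b → M a b = if G.Adj a b then -1 else 0 := by
    intro a b hab
    have := hoff a b hab
    simp only [hMdef, Matrix.map_apply, Matrix.neg_apply, this]
    split <;> norm_num
  have hMinvpos : 0 < M⁻¹ u w := inv_entry_pos G hconn M hneg hMoff u w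
  have hNR : (0 : ℝ) < (N : ℝ) := by
    rw [← hR, hinvneg]
    have hdRpos : (0 : ℝ) < (((-I).det : ℤ) : ℝ) := by exact_mod_cast hdI
    rw [Matrix.neg_apply, neg_mul_neg]
    exact mul_pos hdRpos hMinvpos
  have hNpos : 0 < N := by exact_mod_cast hNR
  refine ⟨?_, ⟨N, hQ⟩⟩
  rw [hQ]
  exact_mod_cast hNpos
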